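/- The set {(n·1 + m·x)·x^t for n,m ∈ N and 0 ≤ t ≤ 3, together with n·1 + x^3 and n·1 + m·x^4 for n,m ∈ N} is a set of normal forms for the semiring N[x]/(x = 1 + x^2). -/

import Mathlib

open Polynomial

@[ext] structure Ei where
  a : ℤ
  b : ℤ

namespace Ei
instance : Zero Ei := ⟨⟨0, 0⟩⟩
instance : One Ei := ⟨⟨1, 0⟩⟩
instance : Add Ei := ⟨fun x y => ⟨x.a + y.a, x.b + y.b⟩⟩
instance : Neg Ei := ⟨fun x => ⟨-x.a, -x.b⟩⟩
instance : Mul Ei := ⟨fun x y => ⟨x.a * y.a - x.b * y.b, x.a * y.b + x.b * y.a + x.b * y.b⟩⟩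

@[simp] lemma zero_a : (0 : Ei).a = 0 := rfl
@[simp] lemma zero_b : (0 : Ei).b = 0 := rfl
@[simp] lemma one_a : (1 : Ei).a = 1 := rfl
@[simp] lemma one_b : (1 : Ei).b = 0 := rfl
@[simp] lemma add_a (x y : Ei) : (x + y).a = x.a + y.a := rfl
@[simp] lemma add_b (x y : Ei) : (x + y).b = x.b + y.b := rfl
@[simp] lemma neg_a (x : Ei) : (-x).a = -x.a := rfl
@[simp] lemma neg_b (x : Ei) : (-x).b = -x.b := rfl
@[simp] lemma mul_a (x y : Ei) : (x * y).a = x.a * y.a - x.b * y.b := rfl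
@[simp] lemma mul_b (x y : Ei) : (x * y).b = x.a * y.b + x.b * y.a + x.b * y.b := rfl

instance : CommRing Ei where
  add_assoc x y z := by ext <;> simp <;> ring
  zero_add x := by ext <;> simp
  add_zero x := by ext <;> simp
  add_comm x y := by ext <;> simp <;> ring
  mul_assoc x y z := by ext <;> simp <;> ring
  one_mul x := by ext <;> simp
  mul_one x := by ext <;> simp
  left_distrib x y z := by ext <;> simp <;> ring
  right_distrib x y z := by ext <;> simp <;> ring
  zero_mul x := by ext <;> simp
  mul_zero x := by ext <;> simp
  mul_comm x y := by ext <;> simp <;> ring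
  neg_add_cancel x := by ext <;> simp
  nsmul := nsmulRec
  zsmul := zsmulRec

@[simp] lemma natCast_a (n : ℕ) : ((n : Ei)).a = n := by
  induction n with
  | zero => simp [Nat.cast_zero]
  | succ n ih => rw [Nat.cast_succ]; simp [ih]

@[simp] lemma natCast_b (n : ℕ) : ((n : Ei)).b = 0 := by
  induction n with
  | zero => simp [Nat.cast_zero]
  | succ n ih => rw [Nat.cast_succ]; simp [ih]

def ω : Ei := ⟨0, 1⟩

lemma omega_rel : (ω : Ei) = 1 + ω ^ 2 := by ext <;> simp [pow_two, ω]

end Ei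

noncomputable section

abbrev P := Polynomial ℕ
abbrev cc : RingCon P := ringConGen (fun a b : Polynomial ℕ => a = X ∧ b = 1 + X ^ 2)
lemma base : cc X (1 + X ^ 2) := RingConGen.Rel.of _ _ ⟨rfl, rfl⟩
lemma step (p r : P) : cc (p + r * X) (p + r * (1 + X ^ 2)) :=
  cc.add (cc.refl p) (cc.mul (cc.refl r) base)
lemma stepE {s t : P} (p r : P) (hs : s = p + r * X) (ht : t = p + r * (1 + X ^ 2)) : cc s t := by
  rw [hs, ht]; exact step p r
/-- forward chain step: s = p + r*X  ~  t = p + r*(1+X²), then continue -/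
lemma chF {s v : P} (p r t : P) (hs : s = p + r * X) (ht : t = p + r * (1 + X ^ 2))
    (h : cc t v) : cc s v := cc.trans (stepE p r hs ht) h
/-- backward chain step: s = p + r*(1+X²) ~ t = p + r*X, then continue -/
lemma chB {s v : P} (p r t : P) (hs : s = p + r * (1 + X ^ 2)) (ht : t = p + r * X)
    (h : cc t v) : cc s v := cc.trans (cc.symm (stepE p r ht hs)) h
def u (c₀ c₁ c₂ c₃ c₄ : ℕ) : P := C c₀ + C c₁ * X + C c₂ * X ^ 2 + C c₃ * X ^ 3 + C c₄ * X ^ 4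

lemma ueq (c₀ c₁ c₂ c₃ c₄ : ℕ) {q : P} (h : q = u c₀ c₁ c₂ c₃ c₄) : cc q (u c₀ c₁ c₂ c₃ c₄) :=
  h ▸ cc.refl _

lemma L5 : cc (X ^ 5 : P) (1 + X ^ 4) := by
  refine chF 0 (X^4) (X^4+X^6) (by ring) (by ring) ?_
  refine chF (X^6) (X^3) (X^3+X^5+X^6) (by ring) (by ring) ?_
  refine chF (X^5+X^6) (X^2) (X^2+X^4+X^5+X^6) (by ring) (by ring) ?_
  refine chF (X^4+X^5+X^6) X (X+X^3+X^4+X^5+X^6) (by ring) (by ring) ?_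
  refine chF (X^3+X^4+X^5+X^6) 1 (1+X^2+X^3+X^4+X^5+X^6) (by ring) (by ring) ?_
  refine chB (1+X^3+X^5+X^6) (X^2) (1+2*X^3+X^5+X^6) (by ring) (by ring) ?_
  refine chB (1+X^3+X^6) (X^3) (1+X^3+X^4+X^6) (by ring) (by ring) ?_
  refine chB (1+X^3) (X^4) (1+X^3+X^5) (by ring) (by ring) ?_
  exact cc.symm (stepE 1 (X^3) (by ring) (by ring))

lemma move0 (a b c d e : ℕ) : cc (u (a+1) b (c+1) d e) (u a (b+1) c d e) :=
  cc.symm (stepE (u a b c d e) 1 (by simp [u, C_add]; ring) (by simp [u, C_add]; ring))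
lemma move1 (a b c d e : ℕ) : cc (u a (b+1) c (d+1) e) (u a b (c+1) d e) :=
  cc.symm (stepE (u a b c d e) X (by simp [u, C_add]; ring) (by simp [u, C_add]; ring))
lemma move2 (a b c d e : ℕ) : cc (u a b (c+1) d (e+1)) (u a b c (d+1) e) :=
  cc.symm (stepE (u a b c d e) (X^2) (by simp [u, C_add]; ring) (by simp [u, C_add]; ring))

lemma moveS2 (a b c d e : ℕ) : cc (u a (b+1) c d (e+1)) (u (a+1) b c (d+1) e) := by
  set q := u a b c d e with hq
  refine chF (q + X^4) 1 (q+1+X^2+X^4) (by simp [u, hq, C_add]; ring) (by ring) ?_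
  refine chB (q+1) (X^2) (u (a+1) b c (d+1) e) (by simp [u, hq, C_add]; ring) ?_ (cc.refl _)
  simp [u, hq, C_add]; ring

lemma moveS1 (a b c d e : ℕ) : cc (u (a+1) b c (d+2) e) (u a b c (d+1) e) := by
  set q := u a b c d e with hq
  refine chF (q+1+X^3) (X^2) (q+1+X^3+X^2+X^4) (by simp [u, hq, C_add]; ring) (by ring) ?_
  refine chB (q+X^3+X^4) 1 (q+X+X^3+X^4) (by ring) (by ring) ?_
  refine chB (q+X^4) X (q+X^2+X^4) (by ring) (by ring) ?_
  exact chB q (X^2) (u a b c (d+1) e) (by ring) (by simp [u, hq, C_add]; ring) (cc.refl _)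

lemma moveS3 (a b c d e : ℕ) : cc (u (a+1) b c (d+1) (e+1)) (u a b c d (e+1)) := by
  set q := u a b c d e with hq
  refine chF (q+1+X^4) (X^2) (q+1+X^2+2*X^4) (by simp [u, hq, C_add]; ring) (by ring) ?_
  refine chB (q+2*X^4) 1 (q+X+2*X^4) (by ring) (by ring) ?_
  refine chF (q+X+X^4) (X^3) (q+X+X^3+X^4+X^5) (by ring) (by ring) ?_
  refine chB (q+X^4+X^5) X (q+X^2+X^4+X^5) (by ring) (by ring) ?_
  refine chB (q+X^5) (X^2) (q+X^3+X^5) (by ring) (by ring) ?_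
  exact chB q (X^3) (u a b c d (e+1)) (by ring) (by simp [u, hq, C_add]; ring) (cc.refl _)

lemma Cnat (n : ℕ) : (C n : P) = (n : P) := rfl

def Nml (q : P) : Prop :=
  (∃ n m t : ℕ, t ≤ 3 ∧ q = ((n : Polynomial ℕ) + (m : Polynomial ℕ) * X) * X ^ t) ∨
  (∃ n : ℕ, q = (n : Polynomial ℕ) + X ^ 3) ∨
  (∃ n m : ℕ, q = (n : Polynomial ℕ) + (m : Polynomial ℕ) * X ^ 4)

lemma stuck_nml (c₀ c₁ c₂ c₃ c₄ : ℕ)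
    (h02 : ¬(1 ≤ c₀ ∧ 1 ≤ c₂)) (h13 : ¬(1 ≤ c₁ ∧ 1 ≤ c₃)) (h24 : ¬(1 ≤ c₂ ∧ 1 ≤ c₄))
    (h14 : ¬(1 ≤ c₁ ∧ 1 ≤ c₄)) (h03 : ¬(1 ≤ c₀ ∧ 2 ≤ c₃)) (h034 : ¬(1 ≤ c₀ ∧ 1 ≤ c₃ ∧ 1 ≤ c₄)) :
    Nml (u c₀ c₁ c₂ c₃ c₄) := by
  rcases Nat.eq_zero_or_pos c₀ with hz0 | hp0
  · subst hz0
    rcases Nat.eq_zero_or_pos c₁ with hz1 | hp1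
    · subst hz1
      rcases Nat.eq_zero_or_pos c₂ with hz2 | hp2
      · subst hz2
        exact Or.inl ⟨c₃, c₄, 3, by norm_num, by simp only [u, Cnat]; ring⟩
      · have : c₄ = 0 := by omega
        subst this
        exact Or.inl ⟨c₂, c₃, 2, by norm_num, by simp only [u, Cnat]; ring⟩
    · have h3 : c₃ = 0 := by omega
      have h4 : c₄ = 0 := by omega
      subst h3; subst h4
      exact Or.inl ⟨c₁, c₂, 1, by norm_num, by simp only [u, Cnat]; ring⟩
  · have h2 : c₂ = 0 := by omega
    subst h2
    rcases Nat.eq_zero_or_pos c₁ with hz1 | hp1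
    · subst hz1
      rcases Nat.eq_zero_or_pos c₃ with hz3 | hp3
      · subst hz3
        exact Or.inr (Or.inr ⟨c₀, c₄, by simp only [u, Cnat]; ring⟩)
      · have h3 : c₃ = 1 := by omega
        have h4 : c₄ = 0 := by omega
        subst h3; subst h4
        exact Or.inr (Or.inl ⟨c₀, by simp only [u, Cnat]; ring⟩)
    · have h3 : c₃ = 0 := by omega
      have h4 : c₄ = 0 := by omega
      subst h3; subst h4
      exact Or.inl ⟨c₀, c₁, 0, by norm_num, by simp only [u, Cnat]; ring⟩

lemma master : ∀ N c₀ c₁ c₂ c₃ c₄, c₀ + 3*c₁ + 3*c₂ + 4*c₃ + 9*c₄ ≤ N →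
    ∃ q, Nml q ∧ cc (u c₀ c₁ c₂ c₃ c₄) q := by
  intro N
  induction N with
  | zero =>
    intro c₀ c₁ c₂ c₃ c₄ h
    have h0 : c₀ = 0 := by omega
    have h1 : c₁ = 0 := by omega
    have h2 : c₂ = 0 := by omega
    have h3 : c₃ = 0 := by omega
    have h4 : c₄ = 0 := by omega
    subst h0; subst h1; subst h2; subst h3; subst h4
    exact ⟨_, stuck_nml 0 0 0 0 0 (by omega) (by omega) (by omega) (by omega) (by omega) (by omega), cc.refl _⟩
  | succ N ih =>
    intro c₀ c₁ c₂ c₃ c₄ hμ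
    by_cases h02 : 1 ≤ c₀ ∧ 1 ≤ c₂
    · obtain ⟨a, rfl⟩ : ∃ a, c₀ = a + 1 := ⟨c₀ - 1, by omega⟩
      obtain ⟨c, rfl⟩ : ∃ c, c₂ = c + 1 := ⟨c₂ - 1, by omega⟩
      obtain ⟨q, hN, hq⟩ := ih a (c₁+1) c c₃ c₄ (by omega)
      exact ⟨q, hN, cc.trans (move0 a c₁ c c₃ c₄) hq⟩
    by_cases h13 : 1 ≤ c₁ ∧ 1 ≤ c₃
    · obtain ⟨b, rfl⟩ : ∃ b, c₁ = b + 1 := ⟨c₁ - 1, by omega⟩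
      obtain ⟨d, rfl⟩ : ∃ d, c₃ = d + 1 := ⟨c₃ - 1, by omega⟩
      obtain ⟨q, hN, hq⟩ := ih c₀ b (c₂+1) d c₄ (by omega)
      exact ⟨q, hN, cc.trans (move1 c₀ b c₂ d c₄) hq⟩
    by_cases h24 : 1 ≤ c₂ ∧ 1 ≤ c₄
    · obtain ⟨c, rfl⟩ : ∃ c, c₂ = c + 1 := ⟨c₂ - 1, by omega⟩
      obtain ⟨e, rfl⟩ : ∃ e, c₄ = e + 1 := ⟨c₄ - 1, by omega⟩
      obtain ⟨q, hN, hq⟩ := ih c₀ c₁ c (c₃+1) e (by omega)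
      exact ⟨q, hN, cc.trans (move2 c₀ c₁ c c₃ e) hq⟩
    by_cases h14 : 1 ≤ c₁ ∧ 1 ≤ c₄
    · obtain ⟨b, rfl⟩ : ∃ b, c₁ = b + 1 := ⟨c₁ - 1, by omega⟩
      obtain ⟨e, rfl⟩ : ∃ e, c₄ = e + 1 := ⟨c₄ - 1, by omega⟩
      obtain ⟨q, hN, hq⟩ := ih (c₀+1) b c₂ (c₃+1) e (by omega)
      exact ⟨q, hN, cc.trans (moveS2 c₀ b c₂ c₃ e) hq⟩
    by_cases h03 : 1 ≤ c₀ ∧ 2 ≤ c₃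
    · obtain ⟨a, rfl⟩ : ∃ a, c₀ = a + 1 := ⟨c₀ - 1, by omega⟩
      obtain ⟨d, rfl⟩ : ∃ d, c₃ = d + 2 := ⟨c₃ - 2, by omega⟩
      obtain ⟨q, hN, hq⟩ := ih a c₁ c₂ (d+1) c₄ (by omega)
      exact ⟨q, hN, cc.trans (moveS1 a c₁ c₂ d c₄) hq⟩
    by_cases h034 : 1 ≤ c₀ ∧ 1 ≤ c₃ ∧ 1 ≤ c₄
    · obtain ⟨a, rfl⟩ : ∃ a, c₀ = a + 1 := ⟨c₀ - 1, by omega⟩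
      obtain ⟨d, rfl⟩ : ∃ d, c₃ = d + 1 := ⟨c₃ - 1, by omega⟩
      obtain ⟨e, rfl⟩ : ∃ e, c₄ = e + 1 := ⟨c₄ - 1, by omega⟩
      obtain ⟨q, hN, hq⟩ := ih a c₁ c₂ d (e+1) (by omega)
      exact ⟨q, hN, cc.trans (moveS3 a c₁ c₂ d e) hq⟩
    exact ⟨_, stuck_nml c₀ c₁ c₂ c₃ c₄ h02 h13 h24 h14 h03 h034, cc.refl _⟩

lemma ccOfEq {s t : P} (h : s = t) : cc s t := h ▸ cc.refl _

lemma uadd (a b c d e a' b' c' d' e' : ℕ) :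
    u a b c d e + u a' b' c' d' e' = u (a+a') (b+b') (c+c') (d+d') (e+e') := by
  simp only [u, Cnat]; push_cast; ring

lemma mono : ∀ n a, ∃ c₀ c₁ c₂ c₃ c₄, cc (C a * X ^ n) (u c₀ c₁ c₂ c₃ c₄) := by
  intro n
  induction n using Nat.strong_induction_on with
  | _ n ih =>
    intro a
    by_cases h : n ≤ 4
    · interval_cases n
      · exact ⟨a, 0, 0, 0, 0, ccOfEq (by simp only [u, C_0]; ring)⟩
      · exact ⟨0, a, 0, 0, 0, ccOfEq (by simp only [u, C_0]; ring)⟩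
      · exact ⟨0, 0, a, 0, 0, ccOfEq (by simp only [u, C_0]; ring)⟩
      · exact ⟨0, 0, 0, a, 0, ccOfEq (by simp only [u, C_0]; ring)⟩
      · exact ⟨0, 0, 0, 0, a, ccOfEq (by simp only [u, C_0]; ring)⟩
    · obtain ⟨m, rfl⟩ : ∃ m, n = m + 5 := ⟨n - 5, by omega⟩
      obtain ⟨p₀, p₁, p₂, p₃, p₄, hp⟩ := ih m (by omega) a
      obtain ⟨q₀, q₁, q₂, q₃, q₄, hq⟩ := ih (m+4) (by omega) a
      refine ⟨p₀+q₀, p₁+q₁, p₂+q₂, p₃+q₃, p₄+q₄, ?_⟩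
      refine cc.trans (ccOfEq (show (C a * X^(m+5) : P) = C a * X^m * X^5 by ring)) ?_
      refine cc.trans (cc.mul (cc.refl (C a * X^m)) L5) ?_
      refine cc.trans (ccOfEq (show (C a * X^m * (1+X^4) : P) = C a * X^m + C a * X^(m+4) by ring)) ?_
      exact cc.trans (cc.add hp hq) (ccOfEq (uadd _ _ _ _ _ _ _ _ _ _))

lemma toU (p : P) : ∃ c₀ c₁ c₂ c₃ c₄, cc p (u c₀ c₁ c₂ c₃ c₄) := by
  induction p using Polynomial.induction_on' with
  | add p q hp hq =>
    obtain ⟨a, b, c, d, e, hp⟩ := hp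
    obtain ⟨a', b', c', d', e', hq⟩ := hq
    exact ⟨_, _, _, _, _, cc.trans (cc.add hp hq) (ccOfEq (uadd a b c d e a' b' c' d' e'))⟩
  | monomial n a =>
    rw [← C_mul_X_pow_eq_monomial]
    exact mono n a

def phi : P →+* Ei := eval₂RingHom (Nat.castRingHom Ei) Ei.ω
def psi : P →+* ℕ∞ := eval₂RingHom (Nat.castRingHom ℕ∞) ⊤

@[simp] lemma phi_X : phi X = Ei.ω := eval₂_X _ _
@[simp] lemma phi_nat (n : ℕ) : phi (n : P) = (⟨n, 0⟩ : Ei) := by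
  rw [map_natCast]; ext <;> simp
@[simp] lemma psi_X : psi X = ⊤ := eval₂_X _ _
@[simp] lemma psi_nat (n : ℕ) : psi (n : P) = (n : ℕ∞) := map_natCast _ _

@[simp] lemma etopmul : (⊤:ℕ∞) * ⊤ = ⊤ := ENat.top_mul (by simp)
@[simp] lemma etop1 : (⊤:ℕ∞)^1 = ⊤ := by rw [pow_one]
@[simp] lemma etop2 : (⊤:ℕ∞)^2 = ⊤ := ENat.top_pow (by norm_num)
@[simp] lemma etop3 : (⊤:ℕ∞)^3 = ⊤ := ENat.top_pow (by norm_num)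
@[simp] lemma etop4 : (⊤:ℕ∞)^4 = ⊤ := ENat.top_pow (by norm_num)

def rep (a b : ℤ) (c : ℕ∞) : P :=
  if c = ⊤ then
    if 1 ≤ b then
      if 0 ≤ a then (a.toNat : P) + (b.toNat : P) * X
      else if 0 ≤ a + b then (((a+b).toNat : P) + ((-a).toNat : P) * X) * X
      else ((b.toNat : P) + ((-a-b).toNat : P) * X) * X ^ 2
    else if b = 0 then
      if 0 ≤ a then ((a+1).toNat : P) + X ^ 3
      else ((-a).toNat : P) * X ^ 3
    else
      if 0 ≤ a then (a.toNat : P) + ((-b).toNat : P) * X ^ 4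
      else (((-a).toNat : P) + ((-b).toNat : P) * X) * X ^ 3
  else ((c.toNat : ℕ) : P)

lemma enat_ne_zero {m : ℕ} (hm : 1 ≤ m) : (m : ℕ∞) ≠ 0 := by
  exact_mod_cast Nat.one_le_iff_ne_zero.mp hm

lemma rec_nml (q : P) (h : Nml q) : q = rep (phi q).a (phi q).b (psi q) := by
  rcases h with ⟨n, m, t, ht, rfl⟩ | ⟨n, rfl⟩ | ⟨n, m, rfl⟩
  · interval_cases t
    · -- t = 0
      rcases Nat.eq_zero_or_pos m with rfl | hm
      · have hψ : psi (((n:P) + ((0:ℕ):P) * X) * X ^ 0) = (n : ℕ∞) := by simp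
        rw [hψ, rep, if_neg (ENat.coe_ne_top n)]
        simp
      · have hψ : psi (((n:P) + (m:P) * X) * X ^ 0) = ⊤ := by
          simp [ENat.mul_top (enat_ne_zero hm)]
        have hA : (phi (((n:P) + (m:P) * X) * X ^ 0)).a = (n : ℤ) := by simp [Ei.ω, pow_succ, pow_zero]
        have hB : (phi (((n:P) + (m:P) * X) * X ^ 0)).b = (m : ℤ) := by simp [Ei.ω, pow_succ, pow_zero]
        rw [hψ, hA, hB, rep, if_pos rfl, if_pos (by omega), if_pos (by omega)]
        simp
    · -- t = 1
      rcases Nat.eq_zero_or_pos m with rfl | hm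
      · rcases Nat.eq_zero_or_pos n with rfl | hn
        · have hψ : psi ((((0:ℕ):P) + ((0:ℕ):P) * X) * X ^ 1) = ((0:ℕ) : ℕ∞) := by simp
          rw [hψ, rep, if_neg (ENat.coe_ne_top 0)]
          simp
        · have hψ : psi (((n:P) + ((0:ℕ):P) * X) * X ^ 1) = ⊤ := by
            simp [ENat.mul_top (enat_ne_zero hn)]
          have hA : (phi (((n:P) + ((0:ℕ):P) * X) * X ^ 1)).a = (0 : ℤ) := by simp [Ei.ω, pow_succ, pow_zero]
          have hB : (phi (((n:P) + ((0:ℕ):P) * X) * X ^ 1)).b = (n : ℤ) := by simp [Ei.ω, pow_succ, pow_zero]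
          rw [hψ, hA, hB, rep, if_pos rfl, if_pos (by omega), if_pos (by omega)]
          simp; try ring
      · have hψ : psi (((n:P) + (m:P) * X) * X ^ 1) = ⊤ := by
          simp [ENat.mul_top (enat_ne_zero hm)]
        have hA : (phi (((n:P) + (m:P) * X) * X ^ 1)).a = -(m : ℤ) := by simp [Ei.ω, pow_succ, pow_zero]
        have hB : (phi (((n:P) + (m:P) * X) * X ^ 1)).b = ((n+m : ℕ) : ℤ) := by
          push_cast; simp [Ei.ω, pow_succ, pow_zero]; try ring
        rw [hψ, hA, hB, rep, if_pos rfl, if_pos (by omega), if_neg (by omega),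
          if_pos (by omega), show -(m:ℤ) + ((n+m : ℕ):ℤ) = ((n:ℕ):ℤ) by push_cast; ring,
          show -(-(m:ℤ)) = ((m:ℕ):ℤ) by ring]
        simp; try ring
    · -- t = 2
      rcases Nat.eq_zero_or_pos n with rfl | hn
      · rcases Nat.eq_zero_or_pos m with rfl | hm
        · have hψ : psi ((((0:ℕ):P) + ((0:ℕ):P) * X) * X ^ 2) = ((0:ℕ) : ℕ∞) := by simp
          rw [hψ, rep, if_neg (ENat.coe_ne_top 0)]
          simp
        · have hψ : psi ((((0:ℕ):P) + (m:P) * X) * X ^ 2) = ⊤ := by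
            simp [ENat.mul_top (enat_ne_zero hm)]
          have hA : (phi ((((0:ℕ):P) + (m:P) * X) * X ^ 2)).a = -(m:ℤ) := by simp [Ei.ω, pow_succ, pow_zero]; try ring
          have hB : (phi ((((0:ℕ):P) + (m:P) * X) * X ^ 2)).b = (0:ℤ) := by simp [Ei.ω, pow_succ, pow_zero]
          rw [hψ, hA, hB, rep, if_pos rfl, if_neg (by omega), if_pos rfl, if_neg (by omega),
            show -(-(m:ℤ)) = ((m:ℕ):ℤ) by ring]
          simp; try ring
      · rcases Nat.eq_zero_or_pos m with rfl | hm
        · have hψ : psi (((n:P) + ((0:ℕ):P) * X) * X ^ 2) = ⊤ := by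
            simp [ENat.mul_top (enat_ne_zero hn)]
          have hA : (phi (((n:P) + ((0:ℕ):P) * X) * X ^ 2)).a = -(n:ℤ) := by simp [Ei.ω, pow_succ, pow_zero]; try ring
          have hB : (phi (((n:P) + ((0:ℕ):P) * X) * X ^ 2)).b = (n:ℤ) := by simp [Ei.ω, pow_succ, pow_zero]; try ring
          rw [hψ, hA, hB, rep, if_pos rfl, if_pos (by omega), if_neg (by omega),
            if_pos (by omega), show -(n:ℤ) + (n:ℤ) = ((0:ℕ):ℤ) by ring,
            show -(-(n:ℤ)) = ((n:ℕ):ℤ) by ring]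
          simp; try ring
        · have hψ : psi (((n:P) + (m:P) * X) * X ^ 2) = ⊤ := by
            simp [ENat.mul_top (enat_ne_zero hm)]
          have hA : (phi (((n:P) + (m:P) * X) * X ^ 2)).a = -((n+m : ℕ):ℤ) := by
            push_cast; simp [Ei.ω, pow_succ, pow_zero]; try ring
          have hB : (phi (((n:P) + (m:P) * X) * X ^ 2)).b = (n:ℤ) := by simp [Ei.ω, pow_succ, pow_zero]; try ring
          rw [hψ, hA, hB, rep, if_pos rfl, if_pos (by omega), if_neg (by omega),
            if_neg (by omega),
            show -(-((n+m : ℕ):ℤ)) - (n:ℤ) = ((m:ℕ):ℤ) by push_cast; ring]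
          simp; try ring
    · -- t = 3
      rcases Nat.eq_zero_or_pos n with rfl | hn
      · rcases Nat.eq_zero_or_pos m with rfl | hm
        · have hψ : psi ((((0:ℕ):P) + ((0:ℕ):P) * X) * X ^ 3) = ((0:ℕ) : ℕ∞) := by simp
          rw [hψ, rep, if_neg (ENat.coe_ne_top 0)]
          simp
        · have hψ : psi ((((0:ℕ):P) + (m:P) * X) * X ^ 3) = ⊤ := by
            simp [ENat.mul_top (enat_ne_zero hm)]
          have hA : (phi ((((0:ℕ):P) + (m:P) * X) * X ^ 3)).a = (0:ℤ) := by simp [Ei.ω, pow_succ, pow_zero]; try ring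
          have hB : (phi ((((0:ℕ):P) + (m:P) * X) * X ^ 3)).b = -(m:ℤ) := by simp [Ei.ω, pow_succ, pow_zero]; try ring
          rw [hψ, hA, hB, rep, if_pos rfl, if_neg (by omega), if_neg (by omega),
            if_pos (by omega), show -(-(m:ℤ)) = ((m:ℕ):ℤ) by ring]
          simp; try ring
      · rcases Nat.eq_zero_or_pos m with rfl | hm
        · have hψ : psi (((n:P) + ((0:ℕ):P) * X) * X ^ 3) = ⊤ := by
            simp [ENat.mul_top (enat_ne_zero hn)]
          have hA : (phi (((n:P) + ((0:ℕ):P) * X) * X ^ 3)).a = -(n:ℤ) := by simp [Ei.ω, pow_succ, pow_zero]; try ring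
          have hB : (phi (((n:P) + ((0:ℕ):P) * X) * X ^ 3)).b = (0:ℤ) := by simp [Ei.ω, pow_succ, pow_zero]
          rw [hψ, hA, hB, rep, if_pos rfl, if_neg (by omega), if_pos rfl, if_neg (by omega),
            show -(-(n:ℤ)) = ((n:ℕ):ℤ) by ring]
          simp; try ring
        · have hψ : psi (((n:P) + (m:P) * X) * X ^ 3) = ⊤ := by
            simp [ENat.mul_top (enat_ne_zero hm)]
          have hA : (phi (((n:P) + (m:P) * X) * X ^ 3)).a = -(n:ℤ) := by simp [Ei.ω, pow_succ, pow_zero]; try ring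
          have hB : (phi (((n:P) + (m:P) * X) * X ^ 3)).b = -(m:ℤ) := by simp [Ei.ω, pow_succ, pow_zero]; try ring
          rw [hψ, hA, hB, rep, if_pos rfl, if_neg (by omega), if_neg (by omega),
            if_neg (by omega), show -(-(n:ℤ)) = ((n:ℕ):ℤ) by ring,
            show -(-(m:ℤ)) = ((m:ℕ):ℤ) by ring]
          simp; try ring
  · -- G : n + X^3
    have hψ : psi ((n:P) + X ^ 3) = ⊤ := by simp
    have hA : (phi ((n:P) + X ^ 3)).a = (n:ℤ) - 1 := by simp [Ei.ω, pow_succ, pow_zero]; try ring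
    have hB : (phi ((n:P) + X ^ 3)).b = (0:ℤ) := by simp [Ei.ω, pow_succ, pow_zero]
    rcases Nat.eq_zero_or_pos n with rfl | hn
    · rw [hψ, hA, hB, rep, if_pos rfl, if_neg (by omega), if_pos rfl, if_neg (by omega),
        show -(((0:ℕ):ℤ) - 1) = ((1:ℕ):ℤ) by norm_num]
      simp
    · rw [hψ, hA, hB, rep, if_pos rfl, if_neg (by omega), if_pos rfl, if_pos (by omega),
        show ((n:ℤ) - 1 + 1) = ((n:ℕ):ℤ) by ring]
      simp
  · -- H : n + m X^4
    rcases Nat.eq_zero_or_pos m with rfl | hm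
    · have hψ : psi ((n:P) + ((0:ℕ):P) * X ^ 4) = (n : ℕ∞) := by simp
      rw [hψ, rep, if_neg (ENat.coe_ne_top n)]
      simp
    · have hψ : psi ((n:P) + (m:P) * X ^ 4) = ⊤ := by
        simp [ENat.mul_top (enat_ne_zero hm)]
      have hA : (phi ((n:P) + (m:P) * X ^ 4)).a = (n:ℤ) := by simp [Ei.ω, pow_succ, pow_zero]; try ring
      have hB : (phi ((n:P) + (m:P) * X ^ 4)).b = -(m:ℤ) := by simp [Ei.ω, pow_succ, pow_zero]; try ring
      rw [hψ, hA, hB, rep, if_pos rfl, if_neg (by omega), if_neg (by omega),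
        if_pos (by omega), show -(-(m:ℤ)) = ((m:ℕ):ℤ) by ring]
      simp


lemma phi_rel : phi (X : P) = phi (1 + X ^ 2) := by
  rw [map_add, map_one, map_pow, phi_X]; exact Ei.omega_rel

lemma psi_rel : psi (X : P) = psi (1 + X ^ 2) := by
  rw [map_add, map_one, map_pow, psi_X]; simp

def kerCon {T : Type*} [Semiring T] (f : P →+* T) : RingCon P where
  r a b := f a = f b
  iseqv := ⟨fun _ => rfl, Eq.symm, Eq.trans⟩
  mul' h₁ h₂ := by simp only [map_mul]; rw [h₁, h₂]
  add' h₁ h₂ := by simp only [map_add]; rw [h₁, h₂]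

lemma inv_hom {T : Type*} [Semiring T] (f : P →+* T) (hf : f X = f (1 + X ^ 2))
    {p q : P} (h : cc p q) : f p = f q :=
  (RingCon.ringConGen_le (c := kerCon f)).mpr
    (fun x y hxy => by
      obtain ⟨h1, h2⟩ := hxy
      subst h1; subst h2
      exact hf) h

/-- Gröbner–Shirshov normal forms for `ℕ[x]/(x = 1 + x²)`: every polynomial is
congruent to exactly one element of the displayed set. -/
theorem stmt_14 :
    ∀ p : Polynomial ℕ, ∃! q : Polynomial ℕ,
      ((∃ n m t : ℕ, t ≤ 3 ∧
          q = ((n : Polynomial ℕ) + (m : Polynomial ℕ) * X) * X ^ t) ∨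
       (∃ n : ℕ, q = (n : Polynomial ℕ) + X ^ 3) ∨
       (∃ n m : ℕ, q = (n : Polynomial ℕ) + (m : Polynomial ℕ) * X ^ 4)) ∧
      (ringConGen (fun a b : Polynomial ℕ => a = X ∧ b = 1 + X ^ 2)) p q := by
  intro p
  obtain ⟨c₀, c₁, c₂, c₃, c₄, hpu⟩ := toU p
  obtain ⟨q, hqN, hq⟩ := master (c₀+3*c₁+3*c₂+4*c₃+9*c₄) c₀ c₁ c₂ c₃ c₄ le_rfl
  have hpq : cc p q := cc.trans hpu hq
  refine ⟨q, ⟨hqN, hpq⟩, ?_⟩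
  rintro y ⟨hyN, hy⟩
  have hyq : cc y q := cc.trans (cc.symm hy) hpq
  have h1 : phi y = phi q := inv_hom phi phi_rel hyq
  have h2 : psi y = psi q := inv_hom psi psi_rel hyq
  rw [rec_nml y hyN, rec_nml q hqN, h1, h2]
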